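/- Let D be an n×n real matrix, λ a nonzero real number, α and β n×1 column vectors, and L an n×n matrix. If D β = λ j and D L + I = j α^T, then D is invertible and D^{-1} = -L + (1/λ) β α^T. -/
import Mathlib


open Matrix

lemma mul_vecMulVec_aux {n : ℕ} (D : Matrix (Fin n) (Fin n) ℝ) (β α : Fin n → ℝ) :
    D * vecMulVec β α = vecMulVec (D.mulVec β) α := by
  ext i j
  simp [mul_apply, vecMulVec_apply, mulVec, dotProduct, Finset.sum_mul, mul_assoc]

theorem stmt_1 {n : ℕ} (D L : Matrix (Fin n) (Fin n) ℝ) (lam : ℝ) (hlam : lam ≠ 0)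
    (α β : Fin n → ℝ)
    (h1 : D.mulVec β = fun _ => lam)
    (h2 : D * L + 1 = vecMulVec (fun _ => 1) α) :
    IsUnit D.det ∧ D⁻¹ = -L + lam⁻¹ • vecMulVec β α := by
  have hDL : D * L = vecMulVec (fun _ => 1) α - 1 := by
    rw [← h2]; abel
  have hvv : vecMulVec (fun (_ : Fin n) => lam) α = lam • vecMulVec (fun _ => 1) α := by
    ext i j; simp [vecMulVec_apply]
  have hC : D * (-L + lam⁻¹ • vecMulVec β α) = 1 := by
    rw [mul_add, mul_neg, hDL, mul_smul_comm, mul_vecMulVec_aux, h1, hvv,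
      smul_smul, inv_mul_cancel₀ hlam, one_smul]
    abel
  exact ⟨Matrix.isUnit_det_of_right_inverse hC, Matrix.inv_eq_right_inv hC⟩
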